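/- For every permutation π ∈ S_n, the sum Σ_{i=1}^n inv(π·c_n^i) equals cwinv(π) + C(n+1, 3), where c_n is the n-cycle (1,2,…,n). -/

import Mathlib

open Finset

def inversions {n : ℕ} (π : Equiv.Perm (Fin n)) : ℕ :=
  (Finset.univ.filter (fun p : Fin n × Fin n => p.1 < p.2 ∧ π p.2 < π p.1)).card

def winv {n : ℕ} (π : Equiv.Perm (Fin n)) : ℤ :=
  ∑ p ∈ Finset.univ.filter (fun p : Fin n × Fin n => p.1 < p.2 ∧ π p.2 < π p.1),
    ((π p.1 : ℤ) - (π p.2 : ℤ))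

def cwinv {n : ℕ} (π : Equiv.Perm (Fin n)) : ℤ :=
  n * inversions π - 2 * winv π

open Fin.NatCast Fin.CommRing

namespace SumInvCoset

def pairsLT (n : ℕ) : Finset (Fin n × Fin n) := univ.filter fun p => p.1 < p.2

lemma mem_pairsLT {n : ℕ} {p : Fin n × Fin n} : p ∈ pairsLT n ↔ p.1 < p.2 := by
  simp [pairsLT]

lemma rotpow {m : ℕ} (i : ℕ) (x : Fin (m+1)) :
    ((finRotate (m+1)) ^ i) x = x + (i : Fin (m+1)) := by
  induction i generalizing x with
  | zero => simp
  | succ k ih =>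
    rw [pow_succ, Equiv.Perm.mul_apply, finRotate_succ_apply, ih (x+1)]
    push_cast
    ring

lemma sum_Icc_to_univ {m : ℕ} (f : Fin (m+1) → ℤ) :
    ∑ i ∈ Icc 1 (m+1), f (i : Fin (m+1)) = ∑ x, f x := by
  refine Finset.sum_nbij' (i := fun i => ((i : Fin (m+1)))) (j := fun x => if x.val = 0 then m+1 else x.val) ?_ ?_ ?_ ?_ ?_
  · intro a _; exact mem_univ _
  · intro x _
    simp only [mem_Icc]
    have := x.isLt; split <;> omega
  · intro a ha
    simp only [mem_Icc] at ha
    simp only [Fin.val_natCast]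
    have h1 : a % (m+1) = if a = m+1 then 0 else a := by
      rcases eq_or_ne a (m+1) with h|h
      · simp [h]
      · rw [Nat.mod_eq_of_lt (by omega)]; simp [h]
    rw [h1]
    split <;> split <;> omega
  · intro x _
    split
    · next h => ext; simp only [Fin.val_natCast, Nat.mod_self]; omega
    · next h => simp [Fin.cast_val_eq_self]
  · intro a _; rfl

lemma card_gt {n : ℕ} (a : Fin n) : (univ.filter fun b => a < b).card = n - 1 - a.val := by
  rw [show (univ.filter fun b => a < b) = Finset.Ioi a from by ext; simp, Fin.card_Ioi]

lemma card_lt' {n : ℕ} (a : Fin n) : (univ.filter fun b => b < a).card = a.val := by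
  rw [show (univ.filter fun b => b < a) = Finset.Iio a from by ext; simp, Fin.card_Iio]

lemma sum_fst {n : ℕ} (f : Fin n → ℤ) :
    ∑ p ∈ pairsLT n, f p.1 = ∑ a, ((n:ℤ) - 1 - a.val) * f a := by
  rw [pairsLT, sum_filter, ← Finset.univ_product_univ, Finset.sum_product]
  refine Finset.sum_congr rfl fun a _ => ?_
  rw [← sum_filter (fun b => a < b) (fun _ => f a), sum_const, card_gt, nsmul_eq_mul]
  have := a.isLt
  have h : ((n - 1 - a.val : ℕ) : ℤ) = (n:ℤ) - 1 - a.val := by omega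
  rw [h]

lemma sum_snd {n : ℕ} (f : Fin n → ℤ) :
    ∑ p ∈ pairsLT n, f p.2 = ∑ b, (b.val : ℤ) * f b := by
  rw [pairsLT, sum_filter, ← Finset.univ_product_univ, Finset.sum_product, Finset.sum_comm]
  refine Finset.sum_congr rfl fun b _ => ?_
  rw [← sum_filter (fun a => a < b) (fun _ => f b), sum_const, card_lt', nsmul_eq_mul]

lemma S_shift {n : ℕ} (σ : Equiv.Perm (Fin n)) :
    ∑ p ∈ pairsLT n, (((σ p.1).val : ℤ) - (σ p.2).val)
      = ((n:ℤ) - 1) * (∑ x, ((σ x).val : ℤ)) - 2 * ∑ x, (x.val : ℤ) * (σ x).val := by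
  rw [sum_sub_distrib, sum_fst (fun a => ((σ a).val : ℤ)), sum_snd (fun a => ((σ a).val : ℤ))]
  rw [mul_sum, mul_sum, ← sum_sub_distrib, ← sum_sub_distrib]
  exact Finset.sum_congr rfl fun a _ => by ring

lemma S_inv {n : ℕ} (σ : Equiv.Perm (Fin n)) :
    ∑ p ∈ pairsLT n, (((σ p.1).val:ℤ) - (σ p.2).val)
      = ∑ p ∈ pairsLT n, (((σ⁻¹ p.1).val:ℤ) - (σ⁻¹ p.2).val) := by
  rw [S_shift, S_shift]
  have h1 : ∑ x, ((σ x).val : ℤ) = ∑ x, ((σ⁻¹ x).val : ℤ) := by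
    rw [Equiv.sum_comp σ (fun x : Fin n => ((x.val : ℤ))),
      Equiv.sum_comp σ⁻¹ (fun x : Fin n => ((x.val : ℤ)))]
  have h2 : ∑ x, (x.val : ℤ) * (σ x).val = ∑ x, (x.val : ℤ) * (σ⁻¹ x).val := by
    have := Equiv.sum_comp σ (fun y => ((σ⁻¹ y).val : ℤ) * y.val)
    simp only [show ∀ y, σ⁻¹ (σ y) = y from fun y => σ.symm_apply_apply y] at this
    rw [this]
    refine Finset.sum_congr rfl fun x _ => ?_
    ring
  rw [h1, h2]

lemma winv_eq {n : ℕ} (σ : Equiv.Perm (Fin n)) :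
    winv σ = ∑ p ∈ pairsLT n, (if σ p.2 < σ p.1 then ((σ p.1).val:ℤ) - (σ p.2).val else 0) := by
  rw [winv, pairsLT]
  rw [show (univ.filter (fun p : Fin n × Fin n => p.1 < p.2 ∧ σ p.2 < σ p.1))
      = (univ.filter fun p : Fin n × Fin n => p.1 < p.2).filter (fun p => σ p.2 < σ p.1) from by
    rw [filter_filter]]
  rw [sum_filter]

lemma two_winv {n : ℕ} (σ : Equiv.Perm (Fin n)) :
    2 * winv σ = (∑ p ∈ pairsLT n, |((σ p.1).val:ℤ) - (σ p.2).val|)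
      + ∑ p ∈ pairsLT n, (((σ p.1).val:ℤ) - (σ p.2).val) := by
  rw [winv_eq, mul_sum, ← sum_add_distrib]
  refine Finset.sum_congr rfl fun p hp => ?_
  rw [mem_pairsLT] at hp
  have hne : σ p.1 ≠ σ p.2 := fun h => (ne_of_lt hp) (σ.injective h)
  by_cases h : σ p.2 < σ p.1
  · have : ((σ p.2).val : ℤ) < (σ p.1).val := by exact_mod_cast h
    rw [if_pos h, abs_of_nonneg (by omega)]
    ring
  · have h2 : σ p.1 < σ p.2 := lt_of_le_of_ne (not_lt.1 h) hne
    have : ((σ p.1).val : ℤ) < (σ p.2).val := by exact_mod_cast h2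
    rw [if_neg h, abs_of_nonpos (by omega)]
    ring

lemma abs_const {n : ℕ} (σ : Equiv.Perm (Fin n)) :
    ∑ p ∈ pairsLT n, |((σ p.1).val:ℤ) - (σ p.2).val|
      = ∑ p ∈ pairsLT n, ((p.2.val:ℤ) - p.1.val) := by
  refine Finset.sum_nbij'
    (i := fun p => if σ p.1 < σ p.2 then (σ p.1, σ p.2) else (σ p.2, σ p.1))
    (j := fun q => if σ⁻¹ q.1 < σ⁻¹ q.2 then (σ⁻¹ q.1, σ⁻¹ q.2) else (σ⁻¹ q.2, σ⁻¹ q.1))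
    ?_ ?_ ?_ ?_ ?_
  · intro p hp
    rw [mem_pairsLT] at hp
    have hne : σ p.1 ≠ σ p.2 := fun h => (ne_of_lt hp) (σ.injective h)
    rw [mem_pairsLT]
    split
    · next h => exact h
    · next h => exact lt_of_le_of_ne (not_lt.1 h) (Ne.symm hne)
  · intro q hq
    rw [mem_pairsLT] at hq
    have hne : σ⁻¹ q.1 ≠ σ⁻¹ q.2 := fun h => (ne_of_lt hq) (σ⁻¹.injective h)
    rw [mem_pairsLT]
    split
    · next h => exact h
    · next h => exact lt_of_le_of_ne (not_lt.1 h) (Ne.symm hne)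
  · intro p hp
    rw [mem_pairsLT] at hp
    have hne : σ p.1 ≠ σ p.2 := fun h => (ne_of_lt hp) (σ.injective h)
    by_cases h : σ p.1 < σ p.2
    · simp [h, hp]
    · have h2 : σ p.2 < σ p.1 := lt_of_le_of_ne (not_lt.1 h) (Ne.symm hne)
      simp [h, not_lt.2 (le_of_lt hp), hp.not_gt]
  · intro q hq
    rw [mem_pairsLT] at hq
    by_cases h : σ⁻¹ q.1 < σ⁻¹ q.2
    · rw [Equiv.Perm.inv_def] at h; simp [h, hq]
    · rw [Equiv.Perm.inv_def] at h; simp [h, not_lt.2 (le_of_lt hq), hq.not_gt]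
  · intro p hp
    rw [mem_pairsLT] at hp
    have hne : σ p.1 ≠ σ p.2 := fun h => (ne_of_lt hp) (σ.injective h)
    by_cases h : σ p.1 < σ p.2
    · have : ((σ p.1).val : ℤ) < (σ p.2).val := by exact_mod_cast h
      rw [if_pos h, abs_of_nonpos (by omega)]
      simp
    · have h2 : σ p.2 < σ p.1 := lt_of_le_of_ne (not_lt.1 h) (Ne.symm hne)
      have : ((σ p.2).val : ℤ) < (σ p.1).val := by exact_mod_cast h2
      rw [if_neg h, abs_of_nonneg (by omega)]

lemma winv_inv {n : ℕ} (σ : Equiv.Perm (Fin n)) : winv σ⁻¹ = winv σ := by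
  have h1 := two_winv σ
  have h2 := two_winv σ⁻¹
  rw [abs_const] at h1 h2
  have h3 := S_inv σ
  omega

lemma D_eq_winv {n : ℕ} (π : Equiv.Perm (Fin n)) :
    ∑ p ∈ univ.filter (fun p : Fin n × Fin n => p.1 < p.2 ∧ π p.2 < π p.1),
      ((p.2.val:ℤ) - p.1.val) = winv π := by
  rw [← winv_inv π]
  rw [winv]
  refine Finset.sum_nbij' (i := fun p => (π p.2, π p.1)) (j := fun q => (π⁻¹ q.2, π⁻¹ q.1))
    ?_ ?_ ?_ ?_ ?_
  · intro p hp
    simp only [mem_filter, mem_univ, true_and] at hp ⊢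
    simp [hp.2, hp.1]
  · intro q hq
    simp only [mem_filter, mem_univ, true_and, Equiv.Perm.inv_def] at hq ⊢
    simp [hq.2, hq.1]
  · intro p _; simp
  · intro q _; simp
  · intro p _; simp

lemma card_diff {n : ℕ} [NeZero n] (d : Fin n) (hd : d ≠ 0) :
    ((pairsLT n).filter fun p => p.2 - p.1 = d).card = n - d.val := by
  have hdpos : 0 < d.val := by
    rcases Nat.eq_zero_or_pos d.val with h | h
    · exact absurd (Fin.ext (by simp [h])) hd
    · exact h
  rw [← Finset.card_range (n - d.val)]
  refine Finset.card_nbij' (i := fun p => p.1.val) (j := fun k => ((k : Fin n), (k : Fin n) + d))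
    ?_ ?_ ?_ ?_
  · intro p hp
    simp only [mem_coe, mem_filter, mem_pairsLT] at hp
    obtain ⟨hlt, hsub⟩ := hp
    have h2 : p.2 = d + p.1 := by rwa [sub_eq_iff_eq_add] at hsub
    dsimp only
    rw [mem_coe, mem_range]
    rw [h2] at hlt
    have hv := Fin.val_add d p.1
    rw [Fin.lt_def, hv] at hlt
    have := p.1.isLt
    have := d.isLt
    rcases Nat.lt_or_ge (d.val + p.1.val) n with h | h
    · rw [Nat.mod_eq_of_lt h] at hlt; omega
    · have : (d.val + p.1.val) % n = d.val + p.1.val - n := by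
        rw [Nat.mod_eq_sub_mod h, Nat.mod_eq_of_lt (by omega)]
      omega
  · intro k hk
    rw [mem_coe, mem_range] at hk
    have hkn : k < n := by omega
    have hkv : ((k : Fin n)).val = k := by
      rw [Fin.val_natCast, Nat.mod_eq_of_lt hkn]
    simp only [mem_coe, mem_filter, mem_pairsLT]
    have hadd : ((k : Fin n) + d).val = k + d.val := by
      rw [Fin.val_add_eq_of_add_lt] <;> rw [hkv]
      omega
    refine ⟨?_, ?_⟩
    · rw [Fin.lt_def, hadd, hkv]; omega
    · rw [add_sub_cancel_left]
  · intro p hp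
    simp only [mem_coe, mem_filter, mem_pairsLT] at hp
    obtain ⟨hlt, hsub⟩ := hp
    have h2 : p.2 = d + p.1 := by rwa [sub_eq_iff_eq_add] at hsub
    have hc : ((p.1.val : Fin n)) = p.1 := Fin.cast_val_eq_self p.1
    have h3 : ((p.1.val : Fin n), (p.1.val : Fin n) + d) = (p.1, p.2) := by
      rw [hc, h2, add_comm]
    dsimp only
    rw [h3]
  · intro k hk
    rw [mem_coe, mem_range] at hk
    simp [Fin.val_natCast, Nat.mod_eq_of_lt (show k < n by omega)]

lemma group_diff {n : ℕ} [NeZero n] (F : Fin n → ℤ) (hF : F 0 = 0) :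
    ∑ p ∈ pairsLT n, F (p.2 - p.1) = ∑ d : Fin n, ((n - d.val : ℕ) : ℤ) * F d := by
  have step1 : ∑ p ∈ pairsLT n, F (p.2 - p.1)
      = ∑ b ∈ (pairsLT n).image (fun p => p.2 - p.1),
          ((pairsLT n).filter fun p => p.2 - p.1 = b).card • F b :=
    Finset.sum_comp F (fun p : Fin n × Fin n => p.2 - p.1)
  have step2 : ∑ b ∈ (pairsLT n).image (fun p => p.2 - p.1),
          ((pairsLT n).filter fun p => p.2 - p.1 = b).card • F b
      = ∑ d : Fin n, ((pairsLT n).filter fun p => p.2 - p.1 = d).card • F d := by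
    refine Finset.sum_subset (Finset.subset_univ _) fun d _ hd => ?_
    have he : ((pairsLT n).filter fun p => p.2 - p.1 = d) = ∅ :=
      Finset.filter_eq_empty_iff.2 fun p hp hpd => hd (Finset.mem_image.2 ⟨p, hp, hpd⟩)
    rw [he, Finset.card_empty, zero_smul]
  rw [step1, step2]
  refine Finset.sum_congr rfl fun d _ => ?_
  by_cases hd : d = 0
  · subst hd
    rw [hF, smul_zero, mul_zero]
  · rw [card_diff d hd, nsmul_eq_mul]

lemma split3 {n : ℕ} (g : Fin n × Fin n → ℤ) (hdiag : ∀ x, g (x, x) = 0) :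
    ∑ r : Fin n × Fin n, g r = ∑ p ∈ pairsLT n, (g p + g (p.2, p.1)) := by
  rw [sum_add_distrib]
  rw [← Finset.sum_filter_add_sum_filter_not univ (fun r : Fin n × Fin n => r.1 < r.2) g]
  have hsw : ∑ r ∈ univ.filter (fun r : Fin n × Fin n => ¬ r.1 < r.2), g r
      = ∑ p ∈ pairsLT n, g (p.2, p.1) := by
    rw [← Finset.sum_filter_add_sum_filter_not (univ.filter (fun r : Fin n × Fin n => ¬ r.1 < r.2))
      (fun r => r.2 < r.1) g]
    have e1 : (univ.filter (fun r : Fin n × Fin n => ¬ r.1 < r.2)).filter (fun r => r.2 < r.1)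
        = univ.filter (fun r : Fin n × Fin n => r.2 < r.1) := by
      rw [filter_filter]
      refine Finset.filter_congr fun r _ => ?_
      constructor
      · exact fun h => h.2
      · exact fun h => ⟨lt_asymm h, h⟩
    have e2 : ∑ r ∈ (univ.filter (fun r : Fin n × Fin n => ¬ r.1 < r.2)).filter
        (fun r => ¬ r.2 < r.1), g r = 0 := by
      refine Finset.sum_eq_zero fun r hr => ?_
      obtain ⟨a, b⟩ := r
      simp only [filter_filter, mem_filter, mem_univ, true_and] at hr
      have hab : a = b := le_antisymm (not_lt.1 hr.2) (not_lt.1 hr.1)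
      subst hab
      exact hdiag a
    rw [e1, e2, add_zero]
    refine Finset.sum_nbij' (i := fun r : Fin n × Fin n => (r.2, r.1))
      (j := fun p : Fin n × Fin n => (p.2, p.1)) ?_ ?_ ?_ ?_ ?_
    · intro r hr; simp only [mem_filter, mem_univ, true_and] at hr; simpa [mem_pairsLT]
    · intro p hp; rw [mem_pairsLT] at hp; simp [hp]
    · intro r _; rfl
    · intro p _; rfl
    · intro r _; rfl
  rw [hsw, pairsLT]

lemma sum_desc (k : ℕ) : ∑ j ∈ range k, ((k : ℤ) - j) = ((k + 1).choose 2 : ℤ) := by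
  induction k with
  | zero => simp
  | succ k ih =>
    rw [Finset.sum_range_succ]
    have h1 : ∀ j ∈ range k, ((k + 1 : ℕ) : ℤ) - j = ((k : ℤ) - j) + 1 := by
      intro j _; push_cast; ring
    rw [Finset.sum_congr rfl h1, Finset.sum_add_distrib, ih, Finset.sum_const, card_range]
    have h2 : (k + 2).choose 2 = (k + 1).choose 1 + (k + 1).choose 2 := Nat.choose_succ_succ _ _
    push_cast [h2, Nat.choose_one_right]
    ring

lemma hockey (n : ℕ) : ∑ j ∈ range n, (j + 1).choose 2 = (n + 1).choose 3 := by
  have h0 : ∑ j ∈ range n, (j + 1).choose 2 = ∑ i ∈ Icc 1 n, i.choose 2 := by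
    rw [← Finset.Ico_add_one_right_eq_Icc, Finset.sum_Ico_eq_sum_range]
    refine Finset.sum_congr (by simp) fun i _ => by rw [Nat.add_comm]
  have h1 : ∑ i ∈ Icc 1 n, i.choose 2 = ∑ i ∈ Icc 2 n, i.choose 2 := by
    refine (Finset.sum_subset (Finset.Icc_subset_Icc_left one_le_two) fun x hx hx2 => ?_).symm
    simp only [mem_Icc] at hx hx2
    have : x = 1 := by omega
    subst this
    rfl
  rw [h0, h1, Nat.sum_Icc_choose]

lemma Ksum {n : ℕ} : ∑ p ∈ pairsLT n, ((p.2.val : ℤ) - p.1.val) = ((n + 1).choose 3 : ℤ) := by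
  have h : ∀ b : Fin n, (∑ a ∈ univ.filter (fun a => a < b), ((b.val : ℤ) - a.val))
      = (((b.val + 1).choose 2 : ℕ) : ℤ) := by
    intro b
    haveI : NeZero n := ⟨Nat.ne_zero_of_lt b.isLt⟩
    rw [← sum_desc b.val]
    refine Finset.sum_nbij' (i := fun a : Fin n => a.val) (j := fun k => (k : Fin n))
      ?_ ?_ ?_ ?_ ?_
    · intro a ha
      simp only [mem_filter, mem_univ, true_and, Fin.lt_def] at ha
      simpa [mem_range]
    · intro k hk
      rw [mem_range] at hk
      have hkn : k < n := lt_trans hk b.isLt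
      simp only [mem_filter, mem_univ, true_and, Fin.lt_def, Fin.val_natCast]
      rw [Nat.mod_eq_of_lt hkn]
      exact hk
    · intro a _; exact Fin.cast_val_eq_self a
    · intro k hk
      rw [mem_range] at hk
      simp [Fin.val_natCast, Nat.mod_eq_of_lt (lt_trans hk b.isLt)]
    · intro a _; rfl
  have h2 : ∀ b : Fin n, (∑ a : Fin n, if a < b then ((b.val : ℤ) - a.val) else 0)
      = (((b.val + 1).choose 2 : ℕ) : ℤ) := by
    intro b
    rw [← Finset.sum_filter]
    exact h b
  rw [pairsLT, sum_filter, ← Finset.univ_product_univ, Finset.sum_product, Finset.sum_comm]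
  rw [Finset.sum_congr rfl (fun b _ => h2 b)]
  rw [Fin.sum_univ_eq_sum_range (fun j => (((j + 1).choose 2 : ℕ) : ℤ)) n]
  rw [← hockey]
  exact (Nat.cast_sum _ _).symm

lemma inv_cast {n : ℕ} (σ : Equiv.Perm (Fin n)) :
    (inversions σ : ℤ) = ∑ p ∈ pairsLT n, (if σ p.2 < σ p.1 then (1:ℤ) else 0) := by
  rw [inversions]
  rw [show univ.filter (fun p : Fin n × Fin n => p.1 < p.2 ∧ σ p.2 < σ p.1)
      = (pairsLT n).filter (fun p => σ p.2 < σ p.1) from by rw [pairsLT, filter_filter]]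
  rw [Finset.card_filter]
  push_cast
  rfl

theorem key {n : ℕ} [NeZero n] (π : Equiv.Perm (Fin n)) :
    ∑ p ∈ pairsLT n, (∑ x : Fin n, if π (x + (p.2 - p.1)) < π x then (1:ℤ) else 0)
      = cwinv π + ((n + 1).choose 3 : ℤ) := by
  have hF0 : (∑ x : Fin n, if π (x + (0 : Fin n)) < π x then (1:ℤ) else 0) = 0 := by simp
  rw [group_diff (fun d => ∑ x : Fin n, if π (x + d) < π x then (1:ℤ) else 0) hF0]
  have hto : ∑ d : Fin n, ((n - d.val : ℕ) : ℤ) * (∑ x : Fin n, if π (x + d) < π x then (1:ℤ) else 0)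
      = ∑ r : Fin n × Fin n, ((n - (r.2 - r.1).val : ℕ) : ℤ) * (if π r.2 < π r.1 then (1:ℤ) else 0) := by
    have hstep : ∀ d : Fin n, ((n - d.val : ℕ) : ℤ) * (∑ x : Fin n, if π (x + d) < π x then (1:ℤ) else 0)
        = ∑ x : Fin n, ((n - d.val : ℕ) : ℤ) * (if π (x + d) < π x then (1:ℤ) else 0) := by
      intro d; rw [Finset.mul_sum]
    rw [Finset.sum_congr rfl fun d _ => hstep d]
    rw [← Finset.sum_product']
    let e : (Fin n × Fin n) ≃ (Fin n × Fin n) :=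
      { toFun := fun q => (q.2, q.2 + q.1)
        invFun := fun r => (r.2 - r.1, r.1)
        left_inv := fun q => by simp
        right_inv := fun r => by simp }
    have := Fintype.sum_equiv e
      (fun q : Fin n × Fin n => ((n - q.1.val : ℕ) : ℤ) * (if π (q.2 + q.1) < π q.2 then (1:ℤ) else 0))
      (fun r : Fin n × Fin n => ((n - (r.2 - r.1).val : ℕ) : ℤ) * (if π r.2 < π r.1 then (1:ℤ) else 0))
      (fun q => by simp [e])
    rw [← this]
    rw [← Finset.univ_product_univ, Finset.sum_product]
  rw [hto]
  rw [split3 _ (by intro x; simp)]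
  have hterm : ∀ p ∈ pairsLT n,
      ((n - (p.2 - p.1).val : ℕ) : ℤ) * (if π p.2 < π p.1 then (1:ℤ) else 0)
        + ((n - ((p.2, p.1).2 - (p.2, p.1).1).val : ℕ) : ℤ) * (if π (p.2, p.1).2 < π (p.2, p.1).1 then (1:ℤ) else 0)
      = (n : ℤ) * (if π p.2 < π p.1 then (1:ℤ) else 0)
        - 2 * (((p.2.val : ℤ) - p.1.val) * (if π p.2 < π p.1 then (1:ℤ) else 0))
        + ((p.2.val : ℤ) - p.1.val) := by
    intro p hp
    rw [mem_pairsLT] at hp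
    have hle : p.1 ≤ p.2 := le_of_lt hp
    have h21 := Fin.intCast_val_sub_eq_sub_add_ite p.2 p.1
    have h12 := Fin.intCast_val_sub_eq_sub_add_ite p.1 p.2
    rw [if_pos hle] at h21
    rw [if_neg (not_le.2 hp)] at h12
    have hb1 := (p.2 - p.1).isLt
    have hb2 := (p.1 - p.2).isLt
    have hb3 := p.1.isLt
    have hb4 := p.2.isLt
    have hv1 : ((n - (p.2 - p.1).val : ℕ) : ℤ) = (n : ℤ) - ((p.2.val : ℤ) - p.1.val) := by omega
    have hv2 : ((n - (p.1 - p.2).val : ℕ) : ℤ) = (p.2.val : ℤ) - p.1.val := by omega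
    have hne : π p.1 ≠ π p.2 := fun h => (ne_of_lt hp) (π.injective h)
    have hflip : (if π p.1 < π p.2 then (1:ℤ) else 0) = 1 - (if π p.2 < π p.1 then (1:ℤ) else 0) := by
      rcases lt_or_gt_of_ne hne with h | h
      · rw [if_pos h, if_neg (asymm h)]; norm_num
      · rw [if_neg (asymm h), if_pos h]; norm_num
    dsimp only
    rw [hv1, hv2, hflip]
    ring
  rw [Finset.sum_congr rfl hterm]
  have hsplit : ∑ p ∈ pairsLT n,
      ((n : ℤ) * (if π p.2 < π p.1 then (1:ℤ) else 0)
        - 2 * (((p.2.val : ℤ) - p.1.val) * (if π p.2 < π p.1 then (1:ℤ) else 0))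
        + ((p.2.val : ℤ) - p.1.val))
      = (n : ℤ) * (∑ p ∈ pairsLT n, (if π p.2 < π p.1 then (1:ℤ) else 0))
        - 2 * (∑ p ∈ pairsLT n, ((p.2.val : ℤ) - p.1.val) * (if π p.2 < π p.1 then (1:ℤ) else 0))
        + ∑ p ∈ pairsLT n, ((p.2.val : ℤ) - p.1.val) := by
    rw [Finset.sum_add_distrib, Finset.sum_sub_distrib, Finset.mul_sum, Finset.mul_sum]
  rw [hsplit]
  have hD : ∑ p ∈ pairsLT n, ((p.2.val : ℤ) - p.1.val) * (if π p.2 < π p.1 then (1:ℤ) else 0)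
      = winv π := by
    rw [← D_eq_winv]
    rw [show univ.filter (fun p : Fin n × Fin n => p.1 < p.2 ∧ π p.2 < π p.1)
        = (pairsLT n).filter (fun p => π p.2 < π p.1) from by rw [pairsLT, filter_filter]]
    rw [sum_filter]
    exact Finset.sum_congr rfl fun p _ => by rw [mul_ite, mul_one, mul_zero]
  rw [hD, ← inv_cast, Ksum, cwinv]

end SumInvCoset

theorem sum_inv_coset {n : ℕ} (π : Equiv.Perm (Fin n)) :
    ∑ i ∈ Finset.Icc 1 n, (inversions (π * (finRotate n) ^ i) : ℤ)
      = cwinv π + (n + 1).choose 3 := by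
  cases n with
  | zero =>
    have h1 : Finset.Icc 1 0 = (∅ : Finset ℕ) := by decide
    have h2 : (univ.filter (fun p : Fin 0 × Fin 0 => p.1 < p.2 ∧ π p.2 < π p.1)) = ∅ :=
      Finset.eq_empty_of_forall_notMem fun p => p.1.elim0
    simp [h1, cwinv, winv, inversions, h2]
    decide
  | succ m =>
    haveI : NeZero (m + 1) := ⟨m.succ_ne_zero⟩
    calc ∑ i ∈ Finset.Icc 1 (m+1), (inversions (π * (finRotate (m+1)) ^ i) : ℤ)
        = ∑ i ∈ Finset.Icc 1 (m+1), ∑ p ∈ SumInvCoset.pairsLT (m+1),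
            (if π (p.2 + (i : Fin (m+1))) < π (p.1 + (i : Fin (m+1))) then (1:ℤ) else 0) := by
          refine Finset.sum_congr rfl fun i _ => ?_
          rw [SumInvCoset.inv_cast]
          refine Finset.sum_congr rfl fun p _ => ?_
          rw [Equiv.Perm.mul_apply, Equiv.Perm.mul_apply, SumInvCoset.rotpow, SumInvCoset.rotpow]
      _ = ∑ p ∈ SumInvCoset.pairsLT (m+1), ∑ i ∈ Finset.Icc 1 (m+1),
            (if π (p.2 + (i : Fin (m+1))) < π (p.1 + (i : Fin (m+1))) then (1:ℤ) else 0) :=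
          Finset.sum_comm
      _ = ∑ p ∈ SumInvCoset.pairsLT (m+1), ∑ x : Fin (m+1),
            (if π (x + (p.2 - p.1)) < π x then (1:ℤ) else 0) := by
          refine Finset.sum_congr rfl fun p _ => ?_
          rw [SumInvCoset.sum_Icc_to_univ (fun c => if π (p.2 + c) < π (p.1 + c) then (1:ℤ) else 0)]
          refine (Fintype.sum_equiv (Equiv.subRight p.1)
            (fun x => if π (x + (p.2 - p.1)) < π x then (1:ℤ) else 0)
            (fun c => if π (p.2 + c) < π (p.1 + c) then (1:ℤ) else 0) fun x => ?_).symm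
          have e1 : p.2 + (x - p.1) = x + (p.2 - p.1) := by ring
          have e2 : p.1 + (x - p.1) = x := by ring
          simp only [Equiv.subRight_apply, e1, e2]
      _ = cwinv π + ((m + 1 + 1).choose 3 : ℤ) := SumInvCoset.key π
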